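/- Let X be a set, Y a finite set, ℋ ⊆ Y^X, and μ a probability measure on X. Suppose ℋ has an ε-cover of size m with respect to the pseudometric d(F,H) = μ({x : F(x) ≠ H(x)}), where ε < 1/2: i.e., there is ℋ' ⊆ ℋ with |ℋ'| ≤ m such that every F ∈ ℋ is within distance ε of some H ∈ ℋ'. If V ⊆ X is a finite set Natarajan-shattered by ℋ and μ is the uniform measure on V, then |V| ≤ log₂ m / (1 − h₂(ε)). -/

import Mathlib

/-- Binary entropy function. -/
noncomputable def binEnt (t : ℝ) : ℝ :=
  t * Real.logb 2 (1 / t) + (1 - t) * Real.logb 2 (1 / (1 - t))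

/-- `ℱ` Natarajan-shatters the finite set `A`. -/
def NatShatters {X Y : Type*} [DecidableEq X] (ℱ : Set (X → Y)) (A : Finset X) : Prop :=
  ∃ f₀ f₁ : X → Y, (∀ a ∈ A, f₀ a ≠ f₁ a) ∧
    ∀ U ⊆ A, ∃ g ∈ ℱ, ∀ a ∈ A, g a = if a ∈ U then f₁ a else f₀ a

lemma binEnt_eq_aux (t : ℝ) : binEnt t = Real.binEntropy t / Real.log 2 := by
  simp only [binEnt, Real.binEntropy, Real.logb, one_div, Real.log_inv, add_div]
  ring

lemma binEnt_lt_one_aux {ε : ℝ} (h : ε ≠ 2⁻¹) : binEnt ε < 1 := by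
  rw [binEnt_eq_aux, div_lt_one (Real.log_pos one_lt_two)]
  exact Real.binEntropy_lt_log_two.2 h

lemma twoRpowNegEnt {ε : ℝ} (hε0 : 0 < ε) (hε1 : ε < 1) (n : ℕ) :
    (2:ℝ) ^ (-((n:ℝ) * binEnt ε)) = ε ^ (ε * n) * (1 - ε) ^ ((1 - ε) * n) := by
  have h1 : (0:ℝ) < 1 - ε := by linarith
  have key : -((n:ℝ) * binEnt ε)
      = Real.logb 2 ε * (ε * n) + Real.logb 2 (1-ε) * ((1-ε) * n) := by
    rw [binEnt, one_div, one_div, Real.logb_inv, Real.logb_inv]; ring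
  have e1 : (2:ℝ) ^ (Real.logb 2 ε * (ε * (n:ℝ))) = ε ^ (ε * (n:ℝ)) := by
    rw [Real.rpow_mul (by norm_num : (0:ℝ) ≤ 2),
      Real.rpow_logb two_pos (by norm_num) hε0]
  have e2 : (2:ℝ) ^ (Real.logb 2 (1-ε) * ((1-ε) * (n:ℝ))) = (1-ε) ^ ((1-ε) * (n:ℝ)) := by
    rw [Real.rpow_mul (by norm_num : (0:ℝ) ≤ 2),
      Real.rpow_logb two_pos (by norm_num) h1]
  rw [key, Real.rpow_add two_pos, e1, e2]

lemma termLB {ε : ℝ} (hε0 : 0 < ε) (hε : ε < 1/2) (n k : ℕ)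
    (hk : (k:ℝ) ≤ ε * n) (hkn : k ≤ n) :
    ε ^ (ε * (n:ℝ)) * (1-ε) ^ ((1-ε) * (n:ℝ)) ≤ ε ^ k * (1-ε) ^ (n - k) := by
  have h1 : (0:ℝ) < 1 - ε := by linarith
  have hr0 : (0:ℝ) < ε / (1-ε) := div_pos hε0 h1
  have hr1 : ε / (1-ε) ≤ 1 := by rw [div_le_one h1]; linarith
  have hsplit : (1-ε)^n = (1-ε)^(n-k) * (1-ε)^k := by rw [← pow_add]; congr 1; omega
  have hrhs : ε ^ k * (1-ε) ^ (n - k) = (1-ε) ^ (n:ℝ) * (ε/(1-ε)) ^ ((k:ℝ)) := by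
    rw [Real.rpow_natCast, Real.rpow_natCast, div_pow, hsplit]
    field_simp
  have hlhs : ε ^ (ε * (n:ℝ)) * (1-ε) ^ ((1-ε) * (n:ℝ))
      = (1-ε) ^ (n:ℝ) * (ε/(1-ε)) ^ (ε * (n:ℝ)) := by
    have e : (1-ε) ^ ((1-ε) * (n:ℝ)) = (1-ε) ^ ((n:ℝ)) / (1-ε) ^ (ε * (n:ℝ)) := by
      rw [← Real.rpow_sub h1]
      ring_nf
    rw [Real.div_rpow hε0.le h1.le, e]
    field_simp
  rw [hrhs, hlhs]
  exact mul_le_mul_of_nonneg_left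
    (Real.rpow_le_rpow_of_exponent_ge hr0 hr1 hk) (by positivity)

lemma sumChooseLe {ε : ℝ} (hε0 : 0 < ε) (hε : ε < 1/2) (n : ℕ) {c : ℝ} (hc : 0 < c)
    (hterm : ∀ k ≤ n, (k:ℝ) ≤ ε * n → c ≤ ε ^ k * (1-ε) ^ (n - k)) :
    (∑ k ∈ (Finset.range (n+1)).filter (fun k : ℕ => (k:ℝ) ≤ ε * n),
      ((n.choose k : ℝ))) ≤ c⁻¹ := by
  have h1 : (0:ℝ) < 1 - ε := by linarith
  have hone : (∑ k ∈ Finset.range (n+1),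
      ε ^ k * (1-ε) ^ (n-k) * (n.choose k : ℝ)) = 1 := by
    rw [← add_pow]
    norm_num
  have hsub : (∑ k ∈ (Finset.range (n+1)).filter (fun k : ℕ => (k:ℝ) ≤ ε * n),
      ε ^ k * (1-ε) ^ (n-k) * (n.choose k : ℝ)) ≤ 1 := by
    refine le_trans (Finset.sum_le_sum_of_subset_of_nonneg (Finset.filter_subset _ _)
      ?_) hone.le
    intro k _ _
    positivity
  have hcs : c * (∑ k ∈ (Finset.range (n+1)).filter (fun k : ℕ => (k:ℝ) ≤ ε * n),
      ((n.choose k : ℝ))) ≤ 1 := by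
    rw [Finset.mul_sum]
    refine le_trans (Finset.sum_le_sum ?_) hsub
    intro k hk
    simp only [Finset.mem_filter, Finset.mem_range] at hk
    exact mul_le_mul_of_nonneg_right (hterm k (by omega) hk.2) (by positivity)
  calc (∑ k ∈ (Finset.range (n+1)).filter (fun k : ℕ => (k:ℝ) ≤ ε * n), ((n.choose k : ℝ)))
      = (c * ∑ k ∈ (Finset.range (n+1)).filter (fun k : ℕ => (k:ℝ) ≤ ε * n),
        ((n.choose k : ℝ))) * c⁻¹ := by field_simp
    _ ≤ 1 * c⁻¹ := mul_le_mul_of_nonneg_right hcs (by positivity)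
    _ = c⁻¹ := one_mul _

lemma smallCount {X : Type*} [DecidableEq X] (V : Finset X) (t : ℝ) :
    ((V.powerset.filter (fun S => (S.card : ℝ) ≤ t)).card : ℕ) ≤
      ∑ k ∈ (Finset.range (V.card+1)).filter (fun k : ℕ => (k:ℝ) ≤ t),
        (V.card).choose k := by
  classical
  have hsub : V.powerset.filter (fun S => (S.card : ℝ) ≤ t) ⊆
      ((Finset.range (V.card+1)).filter (fun k : ℕ => (k:ℝ) ≤ t)).biUnion
        (fun k => V.powersetCard k) := by
    intro S hS
    simp only [Finset.mem_filter, Finset.mem_powerset] at hS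
    refine Finset.mem_biUnion.2 ⟨S.card, ?_, ?_⟩
    · simp only [Finset.mem_filter, Finset.mem_range]
      exact ⟨Nat.lt_succ_of_le (Finset.card_le_card hS.1), hS.2⟩
    · exact Finset.mem_powersetCard.2 ⟨hS.1, rfl⟩
  calc (V.powerset.filter (fun S => (S.card : ℝ) ≤ t)).card
      ≤ _ := Finset.card_le_card hsub
    _ ≤ _ := Finset.card_biUnion_le.trans (le_of_eq (by
        apply Finset.sum_congr rfl
        intro k _
        exact Finset.card_powersetCard k V))

lemma fiberCard {X Y : Type*} [DecidableEq X] [DecidableEq Y] (V : Finset X) (f₀ f₁ : X → Y)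
    (hne : ∀ a ∈ V, f₀ a ≠ f₁ a) (G : Finset X → (X → Y))
    (hG : ∀ U, U ⊆ V → ∀ a ∈ V, G U a = if a ∈ U then f₁ a else f₀ a)
    (H : X → Y) (t : ℝ) (A : Finset (Finset X))
    (hA : ∀ U ∈ A, U ⊆ V ∧ ((V.filter (fun v => G U v ≠ H v)).card : ℝ) ≤ t) :
    A.card ≤ (V.powerset.filter (fun S => (S.card : ℝ) ≤ t)).card := by
  classical
  set H' : X → Y := fun x => if H x = f₁ x then f₁ x else f₀ x with hH'
  set ψ : Finset X → Finset X := fun U => V.filter (fun v => G U v ≠ H' v) with hψ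
  have hchar : ∀ U ∈ A, ∀ v ∈ V, (v ∈ U ↔ (H v = f₁ v ↔ G U v = H' v)) := by
    intro U hU v hv
    have hGv := hG U (hA U hU).1 v hv
    by_cases hmem : v ∈ U <;> by_cases hHv : H v = f₁ v <;>
      simp [hψ, hH', hGv, hmem, hHv, hne v hv, (hne v hv).symm]
  have hsubmis : ∀ U ∈ A, ψ U ⊆ V.filter (fun v => G U v ≠ H v) := by
    intro U hU v hvmem
    simp only [hψ, Finset.mem_filter] at hvmem ⊢
    refine ⟨hvmem.1, ?_⟩
    intro hGH
    apply hvmem.2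
    have hGv := hG U (hA U hU).1 v hvmem.1
    by_cases hHv : H v = f₁ v
    · simp only [hH', hHv, if_pos]
      rw [← hHv]; exact hGH
    · by_cases hmem : v ∈ U
      · exfalso; apply hHv; rw [← hGH, hGv, if_pos hmem]
      · simp only [hH', if_neg hHv]
        rw [hGv, if_neg hmem]
  apply Finset.card_le_card_of_injOn ψ
  · intro U hU
    simp only [Finset.mem_coe, Finset.mem_filter, Finset.mem_powerset]
    constructor
    · exact Finset.filter_subset _ _
    · exact le_trans (by exact_mod_cast Finset.card_le_card (hsubmis U hU)) (hA U hU).2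
  · intro U₁ hU₁ U₂ hU₂ heq
    simp only [Finset.mem_coe] at hU₁ hU₂
    ext v
    by_cases hv : v ∈ V
    · rw [hchar U₁ hU₁ v hv, hchar U₂ hU₂ v hv]
      have : (G U₁ v ≠ H' v) ↔ (G U₂ v ≠ H' v) := by
        constructor <;> intro h
        · have : v ∈ ψ U₁ := Finset.mem_filter.2 ⟨hv, h⟩
          rw [heq] at this
          exact (Finset.mem_filter.1 this).2
        · have : v ∈ ψ U₂ := Finset.mem_filter.2 ⟨hv, h⟩
          rw [← heq] at this
          exact (Finset.mem_filter.1 this).2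
      tauto
    · constructor <;> intro h
      · exact absurd ((hA U₁ hU₁).1 h) hv
      · exact absurd ((hA U₂ hU₂).1 h) hv

theorem stmt8 {X Y : Type*} [DecidableEq X] [DecidableEq Y] [Fintype Y]
    (ℋ : Set (X → Y)) (V : Finset X) (hV : V.Nonempty)
    (hshatter : NatShatters ℋ V)
    (ε : ℝ) (hε0 : 0 < ε) (hε : ε < 1 / 2) (m : ℕ)
    (ℋ' : Finset (X → Y)) (hsub : ↑ℋ' ⊆ ℋ) (hcard : ℋ'.card ≤ m)
    (hcover : ∀ F ∈ ℋ, ∃ H ∈ ℋ',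
      ((V.filter (fun v => F v ≠ H v)).card : ℝ) / V.card ≤ ε) :
    (V.card : ℝ) ≤ Real.logb 2 m / (1 - binEnt ε) := by
  classical
  obtain ⟨f₀, f₁, hne, hgex⟩ := hshatter
  set n := V.card with hn_def
  have hn : 0 < n := Finset.card_pos.2 hV
  have hε1 : ε < 1 := by linarith
  have h1ε : (0:ℝ) < 1 - ε := by linarith
  -- choose shattering witnesses
  have hGex : ∀ U : Finset X, ∃ g : X → Y, U ⊆ V →
      (g ∈ ℋ ∧ ∀ a ∈ V, g a = if a ∈ U then f₁ a else f₀ a) := by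
    intro U
    by_cases h : U ⊆ V
    · obtain ⟨g, hg1, hg2⟩ := hgex U h
      exact ⟨g, fun _ => ⟨hg1, hg2⟩⟩
    · exact ⟨f₀, fun h' => absurd h' h⟩
  choose G hG using hGex
  -- choose cover elements
  have hΦex : ∀ U : Finset X, ∃ H : X → Y, U ⊆ V →
      (H ∈ ℋ' ∧ ((V.filter (fun v => G U v ≠ H v)).card : ℝ) / n ≤ ε) := by
    intro U
    by_cases h : U ⊆ V
    · obtain ⟨H, h1, h2⟩ := hcover (G U) ((hG U h).1)
      exact ⟨H, fun _ => ⟨h1, h2⟩⟩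
    · exact ⟨f₀, fun h' => absurd h' h⟩
  choose Φ hΦ using hΦex
  set t : ℝ := ε * n with ht_def
  set B := V.powerset.filter (fun S => (S.card : ℝ) ≤ t) with hB_def
  -- fiber decomposition
  have hmap : ∀ U ∈ V.powerset, Φ U ∈ ℋ' :=
    fun U hU => (hΦ U (Finset.mem_powerset.1 hU)).1
  have hfib := Finset.card_eq_sum_card_fiberwise hmap
  have hfiber : ∀ H ∈ ℋ',
      (V.powerset.filter (fun U => Φ U = H)).card ≤ B.card := by
    intro H hH
    apply fiberCard V f₀ f₁ hne G (fun U hU => (hG U hU).2) H t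
    intro U hU
    simp only [Finset.mem_filter, Finset.mem_powerset] at hU
    refine ⟨hU.1, ?_⟩
    have h2 := (hΦ U hU.1).2
    rw [hU.2] at h2
    rw [div_le_iff₀ (by exact_mod_cast hn)] at h2
    exact h2
  have hcount : 2^n ≤ m * B.card := by
    calc 2^n = V.powerset.card := (Finset.card_powerset V).symm
      _ = ∑ H ∈ ℋ', (V.powerset.filter (fun U => Φ U = H)).card := hfib
      _ ≤ ∑ _H ∈ ℋ', B.card := Finset.sum_le_sum hfiber
      _ = ℋ'.card * B.card := by rw [Finset.sum_const, smul_eq_mul]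
      _ ≤ m * B.card := Nat.mul_le_mul_right _ hcard
  -- real bound on B.card
  have hc : (0:ℝ) < (2:ℝ) ^ (-((n:ℝ) * binEnt ε)) := Real.rpow_pos_of_pos two_pos _
  have hterm : ∀ k ≤ n, (k:ℝ) ≤ ε * n →
      (2:ℝ) ^ (-((n:ℝ) * binEnt ε)) ≤ ε ^ k * (1-ε) ^ (n - k) := by
    intro k hkn hk
    rw [twoRpowNegEnt hε0 hε1 n]
    exact termLB hε0 hε n k hk hkn
  have hBreal : (B.card : ℝ) ≤ (2:ℝ) ^ ((n:ℝ) * binEnt ε) := by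
    have h1 := smallCount V t
    have h2 := sumChooseLe hε0 hε n hc hterm
    have hcast : ((∑ k ∈ (Finset.range (n+1)).filter (fun k : ℕ => (k:ℝ) ≤ ε * n),
        n.choose k : ℕ) : ℝ)
        = ∑ k ∈ (Finset.range (n+1)).filter (fun k : ℕ => (k:ℝ) ≤ ε * n),
          ((n.choose k : ℝ)) := by push_cast; rfl
    calc (B.card : ℝ) ≤ ((∑ k ∈ (Finset.range (n+1)).filter
          (fun k : ℕ => (k:ℝ) ≤ ε * n), n.choose k : ℕ) : ℝ) := by exact_mod_cast h1
      _ = _ := hcast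
      _ ≤ ((2:ℝ) ^ (-((n:ℝ) * binEnt ε)))⁻¹ := h2
      _ = (2:ℝ) ^ ((n:ℝ) * binEnt ε) := by
          rw [← Real.rpow_neg (by norm_num), neg_neg]
  have hm : 0 < m := by
    rcases Nat.eq_zero_or_pos m with h | h
    · subst h
      simp at hcount
    · exact h
  have hmain : (2:ℝ) ^ ((n:ℝ)) ≤ (m:ℝ) * (2:ℝ) ^ ((n:ℝ) * binEnt ε) := by
    calc (2:ℝ) ^ ((n:ℝ)) = ((2^n : ℕ) : ℝ) := by
          rw [Real.rpow_natCast]; push_cast; ring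
      _ ≤ ((m * B.card : ℕ) : ℝ) := by exact_mod_cast hcount
      _ = (m:ℝ) * (B.card : ℝ) := by push_cast; ring
      _ ≤ (m:ℝ) * (2:ℝ) ^ ((n:ℝ) * binEnt ε) :=
          mul_le_mul_of_nonneg_left hBreal (by positivity)
  have hmpos : (0:ℝ) < m := by exact_mod_cast hm
  have hlog := Real.logb_le_logb_of_le one_lt_two
    (Real.rpow_pos_of_pos two_pos _) hmain
  rw [Real.logb_rpow two_pos (by norm_num),
    Real.logb_mul (ne_of_gt hmpos) (ne_of_gt (Real.rpow_pos_of_pos two_pos _)),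
    Real.logb_rpow two_pos (by norm_num)] at hlog
  have h1h : (0:ℝ) < 1 - binEnt ε := by
    have := binEnt_lt_one_aux (ne_of_lt (by linarith : ε < 2⁻¹))
    linarith
  rw [le_div_iff₀ h1h]
  nlinarith [hlog]
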